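/- Let H be a complex Hilbert space and M > 0. For each τ ∈ (0,1) let ψ_τ : ℝ → H be strongly measurable with ‖ψ_τ(s)‖ ≤ M for almost every s, and let ψ : ℝ → H be strongly measurable with ‖ψ(s)‖ ≤ M for almost every s. Define, for t > 0 and s ∈ ℝ, Ψ_τ(t + is) = (P_t ∗ ψ_τ)(s) and Ψ(t + is) = (P_t ∗ ψ)(s). Assume that for every z ∈ ℂ with Re z > 0, Ψ_τ(z) → Ψ(z) in H as τ → 0⁺. Then for every scalar function φ ∈ L¹(ℝ, ℂ), the Bochner integrals converge in the norm of H: ∫_ℝ φ(t) ψ_τ(t) dt → ∫_ℝ φ(t) ψ(t) dt as τ → 0⁺. -/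

import Mathlib

open MeasureTheory Filter Real
open scoped ComplexInnerProductSpace

open Set

noncomputable def pk (x s : ℝ) : ℝ := (x / π) / (x ^ 2 + s ^ 2)

lemma pk_nonneg {x : ℝ} (hx : 0 < x) (s : ℝ) : 0 ≤ pk x s := by
  have hπ := Real.pi_pos
  unfold pk
  positivity

lemma pk_sub_comm (x t y : ℝ) : pk x (t - y) = pk x (y - t) := by
  unfold pk
  rw [show (t - y) ^ 2 = (y - t) ^ 2 by ring]

lemma pk_even (x s : ℝ) : pk x (-s) = pk x s := by
  unfold pk; rw [neg_pow]; ring_nf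

lemma pk_continuous {x : ℝ} (hx : 0 < x) : Continuous (pk x) := by
  apply continuous_const.div (by continuity)
  intro s
  positivity

lemma pk_eq {x : ℝ} (hx : 0 < x) (s : ℝ) :
    pk x s = (π * x)⁻¹ * (1 + (s / x) ^ 2)⁻¹ := by
  have hπ := Real.pi_pos
  have h2 : (0:ℝ) < x ^ 2 + s ^ 2 := by positivity
  unfold pk
  field_simp

lemma pk_integrable {x : ℝ} (hx : 0 < x) : Integrable (pk x) := by
  have h : Integrable (fun s : ℝ => (π * x)⁻¹ * (1 + (s / x) ^ 2)⁻¹) :=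
    (integrable_inv_one_add_sq.comp_div hx.ne').const_mul _
  exact h.congr (Eventually.of_forall fun s => (pk_eq hx s).symm)

lemma pk_integral {x : ℝ} (hx : 0 < x) : ∫ s, pk x s = 1 := by
  have hπ := Real.pi_pos
  simp_rw [pk_eq hx]
  rw [MeasureTheory.integral_const_mul,
    MeasureTheory.Measure.integral_comp_div (fun u : ℝ => (1 + u ^ 2)⁻¹) x,
    integral_univ_inv_one_add_sq, abs_of_pos hx, smul_eq_mul]
  field_simp

lemma pk_hasDerivAt {x : ℝ} (hx : 0 < x) (s : ℝ) :
    HasDerivAt (fun u : ℝ => arctan (u / x) / π) (pk x s) s := by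
  have hπ := Real.pi_pos
  have h1 : HasDerivAt (fun u : ℝ => u / x) (1 / x) s := by
    simpa using (hasDerivAt_id s).div_const x
  have h2 := ((Real.hasDerivAt_arctan (s / x)).comp s h1).div_const π
  refine h2.congr_deriv ?_
  rw [pk_eq hx]
  field_simp
lemma pk_integral_Ioi {x : ℝ} (hx : 0 < x) (δ : ℝ) :
    ∫ s in Ioi δ, pk x s = 1 / 2 - arctan (δ / x) / π := by
  have hπ := Real.pi_pos
  have hlim : Tendsto (fun u : ℝ => arctan (u / x) / π) atTop (nhds ((π / 2) / π)) := by
    apply Tendsto.div_const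
    exact (tendsto_nhds_of_tendsto_nhdsWithin Real.tendsto_arctan_atTop).comp
      (tendsto_id.atTop_div_const hx)
  have h := integral_Ioi_of_hasDerivAt_of_tendsto' (a := δ) (fun s _ => pk_hasDerivAt hx s)
    ((pk_integrable hx).integrableOn) hlim
  rw [h]
  congr 1
  field_simp

lemma pk_integral_Iio {x : ℝ} (hx : 0 < x) (δ : ℝ) :
    ∫ s in Iio (-δ), pk x s = 1 / 2 - arctan (δ / x) / π := by
  rw [← integral_Iic_eq_integral_Iio, ← integral_comp_neg_Ioi]
  simp_rw [pk_even]
  exact pk_integral_Ioi hx δ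

lemma pk_tail {x : ℝ} (hx : 0 < x) {δ : ℝ} (hδ : 0 < δ) :
    ∫ s in {s : ℝ | δ < |s|}, pk x s = 2 * (1 / 2 - arctan (δ / x) / π) := by
  have hset : {s : ℝ | δ < |s|} = Iio (-δ) ∪ Ioi δ := by
    ext s
    simp only [mem_setOf_eq, mem_union, mem_Iio, mem_Ioi, lt_abs, lt_neg]
    tauto
  have hdisj : Disjoint (Iio (-δ)) (Ioi δ) := by
    rw [Set.disjoint_left]
    intro s hs hs'
    simp only [mem_Iio, mem_Ioi] at hs hs'
    linarith
  rw [hset, setIntegral_union hdisj measurableSet_Ioi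
    ((pk_integrable hx).integrableOn) ((pk_integrable hx).integrableOn),
    pk_integral_Iio hx δ, pk_integral_Ioi hx δ]
  ring

lemma pk_tail_tendsto {δ : ℝ} (hδ : 0 < δ) :
    Tendsto (fun x => ∫ s in {s : ℝ | δ < |s|}, pk x s)
      (nhdsWithin 0 (Ioi 0)) (nhds 0) := by
  have hπ := Real.pi_pos
  have h1 : Tendsto (fun x : ℝ => δ / x) (nhdsWithin 0 (Ioi 0)) atTop := by
    simp_rw [div_eq_mul_inv]
    exact tendsto_inv_nhdsGT_zero.const_mul_atTop hδ
  have h2 : Tendsto (fun x : ℝ => 2 * (1 / 2 - arctan (δ / x) / π))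
      (nhdsWithin 0 (Ioi 0)) (nhds (2 * (1 / 2 - (π / 2) / π))) := by
    apply Tendsto.const_mul
    apply Tendsto.const_sub
    apply Tendsto.div_const
    exact (tendsto_nhds_of_tendsto_nhdsWithin Real.tendsto_arctan_atTop).comp h1
  have h3 : 2 * (1 / 2 - (π / 2) / π) = 0 := by
    field_simp
    ring
  rw [h3] at h2
  apply h2.congr'
  filter_upwards [self_mem_nhdsWithin] with x hx
  exact (pk_tail hx hδ).symm
lemma pk_conv_integrand_integrable {x : ℝ} (hx : 0 < x) {E : Type*} [NormedAddCommGroup E]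
    [NormedSpace ℝ E] {h : ℝ → E} (hh : Integrable h) :
    Integrable (fun p : ℝ × ℝ => pk x (p.1 - p.2) • h p.2) (volume.prod volume) := by
  have := hh.convolution_integrand ((ContinuousLinearMap.lsmul ℝ ℝ).flip) (pk_integrable hx)
  simpa [ContinuousLinearMap.flip_apply, ContinuousLinearMap.lsmul_apply] using this

lemma pk_conv_integrable {x : ℝ} (hx : 0 < x) {E : Type*} [NormedAddCommGroup E]
    [NormedSpace ℝ E] [CompleteSpace E] {h : ℝ → E} (hh : Integrable h) :
    Integrable (fun t => ∫ y, pk x (t - y) • h y) :=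
  (pk_conv_integrand_integrable hx hh).integral_prod_left

lemma pk_conv_l1 {x : ℝ} (hx : 0 < x) {E : Type*} [NormedAddCommGroup E]
    [NormedSpace ℝ E] {h : ℝ → E} (hh : Integrable h) :
    ∫ t, ‖∫ y, pk x (t - y) • h y‖ ≤ ∫ y, ‖h y‖ := by
  have hQ : Integrable (fun p : ℝ × ℝ => pk x (p.1 - p.2) * ‖h p.2‖) (volume.prod volume) := by
    simpa [smul_eq_mul] using pk_conv_integrand_integrable hx hh.norm
  have h1 : ∀ t, ‖∫ y, pk x (t - y) • h y‖ ≤ ∫ y, pk x (t - y) * ‖h y‖ := by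
    intro t
    refine (norm_integral_le_integral_norm _).trans_eq ?_
    congr 1
    funext y
    rw [norm_smul, Real.norm_of_nonneg (pk_nonneg hx _)]
  calc ∫ t, ‖∫ y, pk x (t - y) • h y‖
      ≤ ∫ t, ∫ y, pk x (t - y) * ‖h y‖ :=
        integral_mono_of_nonneg (Eventually.of_forall fun t => norm_nonneg _)
          hQ.integral_prod_left (Eventually.of_forall h1)
    _ = ∫ y, ∫ t, pk x (t - y) * ‖h y‖ := integral_integral_swap hQ
    _ = ∫ y, ‖h y‖ := by
        congr 1
        funext y
        rw [integral_mul_const, integral_sub_right_eq_self (pk x) y, pk_integral hx, one_mul]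

lemma pk_pair_bound {x : ℝ} (hx : 0 < x) {H : Type*} [NormedAddCommGroup H]
    [NormedSpace ℝ H] {w : ℝ → H} {M : ℝ}
    (hw : AEStronglyMeasurable w volume) (hbd : ∀ᵐ s, ‖w s‖ ≤ M) (y : ℝ) :
    ‖∫ t, pk x (y - t) • w t‖ ≤ M := by
  refine (norm_integral_le_integral_norm _).trans ?_
  have hint : Integrable (fun t => pk x (y - t) * M) :=
    ((pk_integrable hx).comp_sub_left y).mul_const M
  refine (integral_mono_of_nonneg (Eventually.of_forall fun t => norm_nonneg _) hint ?_).trans ?_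
  · filter_upwards [hbd] with t ht
    rw [norm_smul, Real.norm_of_nonneg (pk_nonneg hx _)]
    exact mul_le_mul_of_nonneg_left ht (pk_nonneg hx _)
  · rw [integral_mul_const, integral_sub_left_eq_self (pk x) volume y, pk_integral hx, one_mul]

lemma pk_fubini {x : ℝ} (hx : 0 < x) {H : Type*} [NormedAddCommGroup H] [NormedSpace ℂ H]
    [CompleteSpace H] {w : ℝ → H} {M : ℝ} (hw : StronglyMeasurable w) (hbd : ∀ᵐ s, ‖w s‖ ≤ M)
    {φ : ℝ → ℂ} (hφ : Integrable φ) :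
    ∫ t, (∫ y, pk x (t - y) • φ y) • w t = ∫ y, φ y • ∫ t, pk x (y - t) • w t := by
  have hmem : MemLp (fun p : ℝ × ℝ => w p.1) ⊤ (volume.prod volume) := by
    refine memLp_top_of_bound ((hw.comp_measurable measurable_fst).aestronglyMeasurable) M ?_
    exact Measure.quasiMeasurePreserving_fst.ae hbd
  have hprod : Integrable (fun p : ℝ × ℝ => (pk x (p.1 - p.2) • φ p.2) • w p.1)
      (volume.prod volume) :=
    (pk_conv_integrand_integrable hx hφ).smul_of_top_left hmem
  calc ∫ t, (∫ y, pk x (t - y) • φ y) • w t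
      = ∫ t, ∫ y, (pk x (t - y) • φ y) • w t := by
        congr 1
        funext t
        exact (integral_smul_const _ _).symm
    _ = ∫ y, ∫ t, (pk x (t - y) • φ y) • w t := integral_integral_swap hprod
    _ = ∫ y, φ y • ∫ t, pk x (y - t) • w t := by
        congr 1
        funext y
        rw [← integral_smul]
        congr 1
        funext t
        rw [pk_sub_comm, smul_assoc, smul_comm]
lemma translation_cont {φ₀ : ℝ → ℂ} (hc : Continuous φ₀) (hs : HasCompactSupport φ₀) :
    Tendsto (fun s : ℝ => ∫ t, ‖φ₀ t - φ₀ (t - s)‖) (nhds 0) (nhds 0) := by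
  obtain ⟨R, hR⟩ : ∃ R : ℝ, tsupport φ₀ ⊆ Icc (-R) R := by
    obtain ⟨r, hr⟩ := hs.isBounded.subset_closedBall 0
    exact ⟨r, by rwa [Real.closedBall_eq_Icc, zero_sub, zero_add] at hr⟩
  obtain ⟨C, hC⟩ := hs.exists_bound_of_continuous hc
  have key : Tendsto (fun s : ℝ => ∫ t, ‖φ₀ t - φ₀ (t - s)‖) (nhds 0)
      (nhds (∫ t : ℝ, (0 : ℝ))) := by
    apply tendsto_integral_filter_of_dominated_convergence
      ((Icc (-(R+1)) (R+1)).indicator (fun _ => 2 * C))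
    · refine Eventually.of_forall fun s => ?_
      exact ((hc.sub (hc.comp (continuous_id.sub continuous_const))).norm).aestronglyMeasurable
    · filter_upwards [Metric.ball_mem_nhds (0:ℝ) one_pos] with s hs1
      refine Eventually.of_forall fun t => ?_
      rw [Metric.mem_ball, dist_zero_right, Real.norm_eq_abs] at hs1
      by_cases ht : t ∈ Icc (-(R+1)) (R+1)
      · rw [indicator_of_mem ht, Real.norm_of_nonneg (norm_nonneg _)]
        calc ‖φ₀ t - φ₀ (t - s)‖ ≤ ‖φ₀ t‖ + ‖φ₀ (t - s)‖ := norm_sub_le _ _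
          _ ≤ C + C := add_le_add (hC t) (hC (t - s))
          _ = 2 * C := by ring
      · rw [indicator_of_notMem ht]
        simp only [mem_Icc, not_and_or, not_le] at ht
        have h1 : φ₀ t = 0 := by
          apply image_eq_zero_of_notMem_tsupport
          intro hmem
          have := hR hmem
          simp only [mem_Icc] at this
          rcases ht with ht | ht <;> linarith [this.1, this.2, abs_lt.1 hs1]
        have h2 : φ₀ (t - s) = 0 := by
          apply image_eq_zero_of_notMem_tsupport
          intro hmem
          have := hR hmem
          simp only [mem_Icc] at this
          obtain ⟨hs1a, hs1b⟩ := abs_lt.1 hs1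
          rcases ht with ht | ht <;> linarith [this.1, this.2]
        simp [h1, h2]
    · exact (integrableOn_const (C := 2 * C) measure_Icc_lt_top.ne).integrable_indicator
        measurableSet_Icc
    · refine Eventually.of_forall fun t => ?_
      have : Tendsto (fun s : ℝ => ‖φ₀ t - φ₀ (t - s)‖) (nhds 0) (nhds ‖φ₀ t - φ₀ (t - 0)‖) := by
        exact ((continuous_const.sub (hc.comp (continuous_const.sub continuous_id))).norm).tendsto 0
      simpa using this
  simpa using key
lemma approx_Cc {φ₀ : ℝ → ℂ} (hc : Continuous φ₀) (hsupp : HasCompactSupport φ₀)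
    {ε : ℝ} (hε : 0 < ε) :
    ∃ x : ℝ, 0 < x ∧ ∫ t, ‖φ₀ t - ∫ y, pk x (t - y) • φ₀ y‖ ≤ ε := by
  have hφ₀i : Integrable φ₀ := hc.integrable_of_hasCompactSupport hsupp
  obtain ⟨C, hC⟩ := hsupp.exists_bound_of_continuous hc
  set g : ℝ → ℝ := fun s => ∫ t, ‖φ₀ t - φ₀ (t - s)‖ with hgdef
  have hgnn : ∀ s, 0 ≤ g s := fun s => integral_nonneg fun t => norm_nonneg _
  set B : ℝ := 2 * ∫ t, ‖φ₀ t‖ with hBdef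
  have hBnn : 0 ≤ B := by
    have : 0 ≤ ∫ t, ‖φ₀ t‖ := integral_nonneg fun t => norm_nonneg _
    positivity
  have hgB : ∀ s, g s ≤ B := by
    intro s
    have hi1 : Integrable (fun t => ‖φ₀ t‖) := hφ₀i.norm
    have hi2 : Integrable (fun t => ‖φ₀ (t - s)‖) := hi1.comp_sub_right s
    calc g s ≤ ∫ t, (‖φ₀ t‖ + ‖φ₀ (t - s)‖) :=
          integral_mono_of_nonneg (Eventually.of_forall fun t => norm_nonneg _)
            (hi1.add hi2) (Eventually.of_forall fun t => norm_sub_le _ _)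
      _ = (∫ t, ‖φ₀ t‖) + ∫ t, ‖φ₀ (t - s)‖ := integral_add hi1 hi2
      _ = B := by rw [integral_sub_right_eq_self (fun t => ‖φ₀ t‖) s, hBdef]; ring
  -- choose δ
  obtain ⟨δ, hδpos, hδ⟩ : ∃ δ > 0, ∀ s : ℝ, |s| ≤ δ → g s ≤ ε / 2 := by
    have h2 := (Metric.tendsto_nhds.1 (translation_cont hc hsupp)) (ε / 2) (by positivity)
    rw [Metric.eventually_nhds_iff] at h2
    obtain ⟨δ', hδ', hball⟩ := h2
    refine ⟨δ' / 2, by positivity, fun s hs => ?_⟩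
    have h3 := hball (y := s) (by rw [Real.dist_eq, sub_zero]; linarith)
    rw [Real.dist_eq, sub_zero, abs_of_nonneg (hgnn s)] at h3
    exact h3.le
  -- choose x
  obtain ⟨x, hxtail, hx⟩ : ∃ x : ℝ, B * (∫ s in {s : ℝ | δ < |s|}, pk x s) ≤ ε / 2 ∧ 0 < x := by
    have h4 := (Metric.tendsto_nhds.1 (pk_tail_tendsto hδpos)) (ε / (2 * (B + 1)))
      (by positivity)
    have h5 := h4.and self_mem_nhdsWithin
    obtain ⟨x, h6, h7⟩ := h5.exists
    refine ⟨x, ?_, h7⟩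
    rw [Real.dist_eq, sub_zero] at h6
    have h8 : ∫ s in {s : ℝ | δ < |s|}, pk x s ≤ ε / (2 * (B + 1)) :=
      (le_abs_self _).trans h6.le
    calc B * ∫ s in {s : ℝ | δ < |s|}, pk x s ≤ B * (ε / (2 * (B + 1))) := by
          apply mul_le_mul_of_nonneg_left h8 hBnn
      _ ≤ ε / 2 := by
          rw [← mul_div_assoc, div_le_div_iff₀ (by positivity) (by positivity)]
          nlinarith
  refine ⟨x, hx, ?_⟩
  -- product integrand
  set Q : ℝ × ℝ → ℝ := fun p => pk x p.2 * ‖φ₀ p.1 - φ₀ (p.1 - p.2)‖ with hQdef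
  have hQcont : Continuous Q := by
    apply Continuous.mul ((pk_continuous hx).comp continuous_snd)
    exact ((hc.comp continuous_fst).sub (hc.comp (continuous_fst.sub continuous_snd))).norm
  have hQa : Integrable (fun p : ℝ × ℝ => pk x p.2 * ‖φ₀ p.1‖) (volume.prod volume) := by
    have := hφ₀i.norm.mul_prod (pk_integrable hx)
    exact this.congr (Eventually.of_forall fun p => mul_comm _ _)
  have hQb : Integrable (fun p : ℝ × ℝ => pk x p.2 * ‖φ₀ (p.1 - p.2)‖) (volume.prod volume) := by
    have := (pk_integrable hx).convolution_integrand (ContinuousLinearMap.lsmul ℝ ℝ) hφ₀i.norm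
    simpa [ContinuousLinearMap.lsmul_apply, smul_eq_mul] using this
  have hQ : Integrable Q (volume.prod volume) := by
    refine Integrable.mono' (hQa.add hQb) hQcont.aestronglyMeasurable ?_
    refine Eventually.of_forall fun p => ?_
    simp only [Pi.add_apply]
    rw [Real.norm_of_nonneg (mul_nonneg (pk_nonneg hx _) (norm_nonneg _))]
    calc pk x p.2 * ‖φ₀ p.1 - φ₀ (p.1 - p.2)‖
        ≤ pk x p.2 * (‖φ₀ p.1‖ + ‖φ₀ (p.1 - p.2)‖) :=
          mul_le_mul_of_nonneg_left (norm_sub_le _ _) (pk_nonneg hx _)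
      _ = pk x p.2 * ‖φ₀ p.1‖ + pk x p.2 * ‖φ₀ (p.1 - p.2)‖ := by ring
  have hpg : Integrable (fun s => pk x s * g s) := by
    refine hQ.integral_prod_right.congr (Eventually.of_forall fun s => ?_)
    rw [hQdef]
    simp only []
    rw [MeasureTheory.integral_const_mul]
  -- pointwise bound
  have hpt : ∀ t : ℝ, ‖φ₀ t - ∫ y, pk x (t - y) • φ₀ y‖ ≤ ∫ s, Q (t, s) := by
    intro t
    have hI1 : Integrable (fun y => pk x (t - y) • φ₀ t) :=
      ((pk_integrable hx).comp_sub_left t).smul_const (φ₀ t)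
    have hI2 : Integrable (fun y => pk x (t - y) • φ₀ y) := by
      apply Integrable.smul_of_top_left ((pk_integrable hx).comp_sub_left t)
      exact memLp_top_of_bound hc.aestronglyMeasurable C (Eventually.of_forall hC)
    have he1 : φ₀ t = ∫ y, pk x (t - y) • φ₀ t := by
      rw [integral_smul_const, integral_sub_left_eq_self (pk x) volume t, pk_integral hx,
        one_smul]
    calc ‖φ₀ t - ∫ y, pk x (t - y) • φ₀ y‖
        = ‖∫ y, (pk x (t - y) • φ₀ t - pk x (t - y) • φ₀ y)‖ := by
          rw [integral_sub hI1 hI2, ← he1]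
      _ ≤ ∫ y, ‖pk x (t - y) • φ₀ t - pk x (t - y) • φ₀ y‖ := norm_integral_le_integral_norm _
      _ = ∫ y, pk x (t - y) * ‖φ₀ t - φ₀ y‖ := by
          congr 1
          funext y
          rw [← smul_sub, norm_smul, Real.norm_of_nonneg (pk_nonneg hx _)]
      _ = ∫ s, Q (t, s) := by
          rw [← integral_sub_left_eq_self (fun u => pk x u * ‖φ₀ t - φ₀ (t - u)‖) volume t]
          congr 1
          funext y
          simp [hQdef]
  -- assemble
  have hmain : ∫ t, ‖φ₀ t - ∫ y, pk x (t - y) • φ₀ y‖ ≤ ∫ s, pk x s * g s := by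
    calc ∫ t, ‖φ₀ t - ∫ y, pk x (t - y) • φ₀ y‖
        ≤ ∫ t, ∫ s, Q (t, s) :=
          integral_mono_of_nonneg (Eventually.of_forall fun t => norm_nonneg _)
            hQ.integral_prod_left (Eventually.of_forall hpt)
      _ = ∫ s, ∫ t, Q (t, s) := integral_integral_swap hQ
      _ = ∫ s, pk x s * g s := by
          congr 1
          funext s
          rw [hQdef]
          simp only []
          rw [MeasureTheory.integral_const_mul]
  refine hmain.trans ?_
  -- split
  set Ac : Set ℝ := {s : ℝ | |s| ≤ δ} with hAcdef
  have hAcm : MeasurableSet Ac := measurableSet_le (continuous_abs.measurable) measurable_const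
  have hcompl : Acᶜ = {s : ℝ | δ < |s|} := by
    ext s
    simp [hAcdef, not_le]
  have hsplit := integral_add_compl hAcm hpg
  rw [← hsplit, hcompl]
  have hpart1 : ∫ s in Ac, pk x s * g s ≤ ε / 2 := by
    calc ∫ s in Ac, pk x s * g s ≤ ∫ s in Ac, pk x s * (ε / 2) := by
          apply setIntegral_mono_on hpg.integrableOn
            (((pk_integrable hx).mul_const _).integrableOn) hAcm
          intro s hs
          exact mul_le_mul_of_nonneg_left (hδ s hs) (pk_nonneg hx _)
      _ = (∫ s in Ac, pk x s) * (ε / 2) := by rw [integral_mul_const]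
      _ ≤ 1 * (ε / 2) := by
          apply mul_le_mul_of_nonneg_right _ (by positivity)
          rw [← pk_integral hx]
          exact setIntegral_le_integral (pk_integrable hx)
            (Eventually.of_forall fun s => pk_nonneg hx s)
      _ = ε / 2 := one_mul _
  have hpart2 : ∫ s in {s : ℝ | δ < |s|}, pk x s * g s ≤ ε / 2 := by
    calc ∫ s in {s : ℝ | δ < |s|}, pk x s * g s
        ≤ ∫ s in {s : ℝ | δ < |s|}, pk x s * B := by
          apply setIntegral_mono_on hpg.integrableOn
            (((pk_integrable hx).mul_const _).integrableOn) ?_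
          · intro s _
            exact mul_le_mul_of_nonneg_left (hgB s) (pk_nonneg hx _)
          · rw [← hcompl]; exact hAcm.compl
      _ = B * ∫ s in {s : ℝ | δ < |s|}, pk x s := by rw [integral_mul_const]; ring
      _ ≤ ε / 2 := hxtail
  linarith
lemma approx_L1 {φ : ℝ → ℂ} (hφ : Integrable φ) {ε : ℝ} (hε : 0 < ε) :
    ∃ x : ℝ, 0 < x ∧ ∫ t, ‖φ t - ∫ y, pk x (t - y) • φ y‖ ≤ ε := by
  obtain ⟨φ₀, hsupp, hl1, hcont, hφ₀i⟩ :=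
    hφ.exists_hasCompactSupport_integral_sub_le (show (0:ℝ) < ε / 3 by positivity)
  obtain ⟨x, hx, hx3⟩ := approx_Cc hcont hsupp (show (0:ℝ) < ε / 3 by positivity)
  refine ⟨x, hx, ?_⟩
  set c : ℝ → ℂ := fun t => ∫ y, pk x (t - y) • φ y with hcd
  set c₀ : ℝ → ℂ := fun t => ∫ y, pk x (t - y) • φ₀ y with hc₀d
  have hci : Integrable c := pk_conv_integrable hx hφ
  have hc₀i : Integrable c₀ := pk_conv_integrable hx hφ₀i
  -- a.e. pointwise convolution existence
  have hconvφ : ∀ᵐ t : ℝ, Integrable (fun y => pk x (t - y) • φ y) := by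
    have hprod := pk_conv_integrand_integrable hx hφ
    exact ((integrable_prod_iff hprod.aestronglyMeasurable).1 hprod).1
  have hconvφ₀ : ∀ᵐ t : ℝ, Integrable (fun y => pk x (t - y) • φ₀ y) := by
    have hprod := pk_conv_integrand_integrable hx hφ₀i
    exact ((integrable_prod_iff hprod.aestronglyMeasurable).1 hprod).1
  -- third term
  have hterm3 : ∫ t, ‖c₀ t - c t‖ ≤ ε / 3 := by
    have heq : ∀ᵐ t : ℝ, ‖c₀ t - c t‖ = ‖∫ y, pk x (t - y) • (φ₀ y - φ y)‖ := by
      filter_upwards [hconvφ, hconvφ₀] with t h1 h2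
      rw [hcd, hc₀d]
      simp only []
      rw [← integral_sub h2 h1]
      congr 1
      · congr 1
        funext y
        rw [smul_sub]
    calc ∫ t, ‖c₀ t - c t‖ = ∫ t, ‖∫ y, pk x (t - y) • (φ₀ y - φ y)‖ := integral_congr_ae heq
      _ ≤ ∫ y, ‖φ₀ y - φ y‖ := pk_conv_l1 hx (hφ₀i.sub hφ)
      _ = ∫ y, ‖φ y - φ₀ y‖ := by simp_rw [norm_sub_rev]
      _ ≤ ε / 3 := hl1
  -- combine
  have hi1 : Integrable (fun t => ‖φ t - φ₀ t‖) := (hφ.sub hφ₀i).norm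
  have hi2 : Integrable (fun t => ‖φ₀ t - c₀ t‖) := (hφ₀i.sub hc₀i).norm
  have hi3 : Integrable (fun t => ‖c₀ t - c t‖) := (hc₀i.sub hci).norm
  calc ∫ t, ‖φ t - c t‖
      ≤ ∫ t, (‖φ t - φ₀ t‖ + ‖φ₀ t - c₀ t‖ + ‖c₀ t - c t‖) := by
        apply integral_mono_of_nonneg (Eventually.of_forall fun t => norm_nonneg _)
          ((hi1.add hi2).add hi3)
        refine Eventually.of_forall fun t => ?_
        calc ‖φ t - c t‖ = ‖(φ t - φ₀ t) + (φ₀ t - c₀ t) + (c₀ t - c t)‖ := by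
              congr 1
              ring
          _ ≤ ‖φ t - φ₀ t‖ + ‖φ₀ t - c₀ t‖ + ‖c₀ t - c t‖ :=
              norm_add₃_le
    _ = (∫ t, ‖φ t - φ₀ t‖) + (∫ t, ‖φ₀ t - c₀ t‖) + ∫ t, ‖c₀ t - c t‖ := by
        have h12 : Integrable (fun t => ‖φ t - φ₀ t‖ + ‖φ₀ t - c₀ t‖) := hi1.add hi2
        rw [← integral_add hi1 hi2, ← integral_add h12 hi3]
    _ ≤ ε / 3 + ε / 3 + ε / 3 := by
        have := hx3
        gcongr
    _ = ε := by ring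

/-- Feldman-type theorem (vector form): if `ψ_τ`, `τ ∈ (0,1)`, and `ψ` are strongly
measurable `H`-valued functions on `ℝ`, uniformly bounded by `M`, and the Poisson
extensions `Ψ_τ(t+is) = (P_t ∗ ψ_τ)(s)` converge pointwise on the open right half-plane
to `Ψ(t+is) = (P_t ∗ ψ)(s)` as `τ → 0⁺`, then for every scalar `φ ∈ L¹(ℝ, ℂ)`,
the Bochner integrals `∫ φ(t) ψ_τ(t) dt` converge in `H` to `∫ φ(t) ψ(t) dt` as `τ → 0⁺`. -/
theorem stmt5 {H : Type*} [NormedAddCommGroup H] [InnerProductSpace ℂ H] [CompleteSpace H]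
    (M : ℝ) (hM : 0 < M)
    (ψ : ℝ → ℝ → H) (ψlim : ℝ → H)
    (hψmeas : ∀ τ ∈ Set.Ioo (0 : ℝ) 1, StronglyMeasurable (ψ τ))
    (hψbd : ∀ τ ∈ Set.Ioo (0 : ℝ) 1, ∀ᵐ s : ℝ, ‖ψ τ s‖ ≤ M)
    (hψlimmeas : StronglyMeasurable ψlim)
    (hψlimbd : ∀ᵐ s : ℝ, ‖ψlim s‖ ≤ M)
    (P : ℝ → ℝ → ℝ) (hP : ∀ t s, P t s = (t / π) / (t ^ 2 + s ^ 2))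
    (hconv : ∀ z : ℂ, 0 < z.re →
      Tendsto (fun τ : ℝ => ∫ s' : ℝ, P z.re (z.im - s') • ψ τ s')
        (nhdsWithin 0 (Set.Ioo 0 1))
        (nhds (∫ s' : ℝ, P z.re (z.im - s') • ψlim s')))
    (φ : ℝ → ℂ) (hφ : Integrable φ) :
    Tendsto (fun τ : ℝ => ∫ t : ℝ, φ t • ψ τ t) (nhdsWithin 0 (Set.Ioo 0 1))
      (nhds (∫ t : ℝ, φ t • ψlim t)) := by
  have hP' : P = pk := by funext t s; rw [hP]; rfl
  rw [hP'] at hconv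
  rw [Metric.tendsto_nhds]
  intro ε hε
  have hε' : (0:ℝ) < ε / (3 * (M + 1)) := by positivity
  obtain ⟨x, hx, hxapprox⟩ := approx_L1 hφ hε'
  set c : ℝ → ℂ := fun t => ∫ y, pk x (t - y) • φ y with hcd
  have hci : Integrable c := pk_conv_integrable hx hφ
  have hmemlim : MemLp ψlim ⊤ (volume : Measure ℝ) :=
    memLp_top_of_bound hψlimmeas.aestronglyMeasurable M hψlimbd
  have hfub_lim : ∫ t, c t • ψlim t = ∫ y, φ y • ∫ t, pk x (y - t) • ψlim t :=
    pk_fubini hx hψlimmeas hψlimbd hφ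
  -- dominated convergence
  have hDCT : Tendsto (fun τ : ℝ => ∫ y, φ y • ∫ t, pk x (y - t) • ψ τ t)
      (nhdsWithin 0 (Set.Ioo 0 1))
      (nhds (∫ y, φ y • ∫ t, pk x (y - t) • ψlim t)) := by
    apply tendsto_integral_filter_of_dominated_convergence (fun y => ‖φ y‖ * M)
    · filter_upwards [self_mem_nhdsWithin] with τ hτ
      apply AEStronglyMeasurable.smul hφ.aestronglyMeasurable
      apply StronglyMeasurable.aestronglyMeasurable
      apply StronglyMeasurable.integral_prod_right'
        (f := fun p : ℝ × ℝ => pk x (p.1 - p.2) • ψ τ p.2)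
      exact (((pk_continuous hx).comp (continuous_fst.sub continuous_snd)).stronglyMeasurable).smul
        ((hψmeas τ hτ).comp_measurable measurable_snd)
    · filter_upwards [self_mem_nhdsWithin] with τ hτ
      refine Eventually.of_forall fun y => ?_
      rw [norm_smul]
      exact mul_le_mul_of_nonneg_left
        (pk_pair_bound hx ((hψmeas τ hτ).aestronglyMeasurable) (hψbd τ hτ) y) (norm_nonneg _)
    · exact hφ.norm.mul_const M
    · refine Eventually.of_forall fun y => ?_
      exact (hconv ⟨x, y⟩ hx).const_smul (φ y)
  have hDCT' := (Metric.tendsto_nhds.1 hDCT) (ε / 3) (by positivity)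
  filter_upwards [hDCT', self_mem_nhdsWithin] with τ hτ2 hτ
  -- integrabilities for this τ
  have hmemτ : MemLp (ψ τ) ⊤ (volume : Measure ℝ) :=
    memLp_top_of_bound (hψmeas τ hτ).aestronglyMeasurable M (hψbd τ hτ)
  have hfub_τ : ∫ t, c t • ψ τ t = ∫ y, φ y • ∫ t, pk x (y - t) • ψ τ t :=
    pk_fubini hx (hψmeas τ hτ) (hψbd τ hτ) hφ
  -- error bound lemma
  have key : ∀ (w : ℝ → H), MemLp w ⊤ (volume : Measure ℝ) → (∀ᵐ s : ℝ, ‖w s‖ ≤ M) →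
      ‖(∫ t, φ t • w t) - ∫ t, c t • w t‖ ≤ ε / 3 := by
    intro w hw hwbd
    have hφw : Integrable (fun t => φ t • w t) := hφ.smul_of_top_left hw
    have hcw : Integrable (fun t => c t • w t) := hci.smul_of_top_left hw
    have hsub : Integrable (fun t => ‖φ t - c t‖ * M) := (hφ.sub hci).norm.mul_const M
    calc ‖(∫ t, φ t • w t) - ∫ t, c t • w t‖
        = ‖∫ t, (φ t • w t - c t • w t)‖ := by rw [integral_sub hφw hcw]
      _ ≤ ∫ t, ‖φ t • w t - c t • w t‖ := norm_integral_le_integral_norm _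
      _ ≤ ∫ t, ‖φ t - c t‖ * M := by
          apply integral_mono_of_nonneg (Eventually.of_forall fun t => norm_nonneg _) hsub
          filter_upwards [hwbd] with t ht
          rw [← sub_smul, norm_smul]
          exact mul_le_mul_of_nonneg_left ht (norm_nonneg _)
      _ = (∫ t, ‖φ t - c t‖) * M := integral_mul_const _ _
      _ ≤ (ε / (3 * (M + 1))) * M := mul_le_mul_of_nonneg_right hxapprox hM.le
      _ ≤ ε / 3 := by
          rw [div_mul_eq_mul_div, div_le_div_iff₀ (by positivity) (by positivity)]
          nlinarith
  have h1 := key (ψ τ) hmemτ (hψbd τ hτ)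
  have h3 := key ψlim hmemlim hψlimbd
  rw [dist_eq_norm] at hτ2 ⊢
  calc ‖(∫ t, φ t • ψ τ t) - ∫ t, φ t • ψlim t‖
      ≤ ‖(∫ t, φ t • ψ τ t) - ∫ t, c t • ψ τ t‖
        + ‖(∫ t, c t • ψ τ t) - ∫ t, c t • ψlim t‖
        + ‖(∫ t, c t • ψlim t) - ∫ t, φ t • ψlim t‖ := by
          have := dist_triangle4 (∫ t, φ t • ψ τ t) (∫ t, c t • ψ τ t)
            (∫ t, c t • ψlim t) (∫ t, φ t • ψlim t)
          simpa [dist_eq_norm] using this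
    _ < ε / 3 + ε / 3 + ε / 3 := by
        have h3' : ‖(∫ t, c t • ψlim t) - ∫ t, φ t • ψlim t‖ ≤ ε / 3 := by
          rw [norm_sub_rev]; exact h3
        apply add_lt_add_of_lt_of_le (add_lt_add_of_le_of_lt h1 ?_) h3'
        rw [hfub_τ, hfub_lim]
        exact hτ2
    _ = ε := by ring
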